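/- Let H be real symmetric n×n, U₀ ∈ ℝ^{n×N} with U₀ᵀHU₀ < 0, and let σ₁(0) be the smallest eigenvalue of U₀ᵀU₀. Set β = min{1, σ₁(0)}. Then for all t ≥ 0 every nonzero eigenvalue σ of Z(t) = exp(−Ht)U₀[I_N − U₀ᵀU₀ + U₀ᵀexp(−2Ht)U₀]^{−1}U₀ᵀexp(−Ht) satisfies σ ≥ β. -/

import Mathlib

open Matrix NormedSpace

/-- The smallest eigenvalue of a symmetric matrix, characterized as the infimum of the
Rayleigh quotient over unit vectors. -/
noncomputable def minEig {N : ℕ} (M : Matrix (Fin N) (Fin N) ℝ) : ℝ :=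
  sInf {r : ℝ | ∃ a : Fin N → ℝ, a ⬝ᵥ a = 1 ∧ r = a ⬝ᵥ (M *ᵥ a)}

/-- For a real hermitian (symmetric) matrix `A`, `exp A - 1 - A` is positive semidefinite. -/
lemma exp_sub_one_sub_posSemidef {m : ℕ} {A : Matrix (Fin m) (Fin m) ℝ}
    (hA : A.IsHermitian) : (exp A - 1 - A).PosSemidef := by
  set U : Matrix (Fin m) (Fin m) ℝ := (hA.eigenvectorUnitary : Matrix (Fin m) (Fin m) ℝ) with hU
  set d : Fin m → ℝ := RCLike.ofReal ∘ hA.eigenvalues with hd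
  have hU1 : U * star U = 1 := (Matrix.mem_unitaryGroup_iff).mp (hA.eigenvectorUnitary).2
  have hU1' : star U * U = 1 := (Matrix.mem_unitaryGroup_iff').mp (hA.eigenvectorUnitary).2
  have hUunit : IsUnit U := ⟨⟨U, star U, hU1, hU1'⟩, rfl⟩
  have hUinv : U⁻¹ = star U := Matrix.inv_eq_right_inv hU1
  have hspec : A = U * diagonal d * star U := hA.spectral_theorem
  have hde : exp d = fun i => Real.exp (d i) := by
    funext i
    rw [Pi.coe_exp]
    exact (congrFun Real.exp_eq_exp_ℝ (d i)).symm
  have hexp : exp A = U * diagonal (fun i => Real.exp (d i)) * star U := by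
    rw [hspec, ← hUinv, Matrix.exp_conj U _ hUunit, Matrix.exp_diagonal, hde]
  have key : exp A - 1 - A =
      U * diagonal (fun i => Real.exp (d i) - 1 - d i) * star U := by
    have h1 : (1 : Matrix (Fin m) (Fin m) ℝ) = U * 1 * star U := by rw [mul_one, hU1]
    have hdiag : diagonal (fun i => Real.exp (d i) - 1 - d i) =
        diagonal (fun i => Real.exp (d i)) - 1 - diagonal d := by
      rw [← Matrix.diagonal_one, Matrix.diagonal_sub, Matrix.diagonal_sub]
    rw [hdiag, hexp]
    nth_rewrite 1 [h1]
    rw [hspec]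
    noncomm_ring
  rw [key]
  have hpsd : (diagonal (fun i => Real.exp (d i) - 1 - d i)).PosSemidef := by
    refine Matrix.posSemidef_diagonal_iff.mpr fun i => ?_
    nlinarith [Real.add_one_le_exp (d i)]
  simpa [Matrix.star_eq_conjTranspose] using hpsd.mul_mul_conjTranspose_same U

lemma dot_self_nonneg' {m : ℕ} (x : Fin m → ℝ) : 0 ≤ x ⬝ᵥ x :=
  Finset.sum_nonneg fun i _ => mul_self_nonneg (x i)

/-- With `β = min{1, λ_min(U₀ᵀU₀)}`, every nonzero eigenvalue `σ` of
`Z(t) = exp(−Ht)U₀[I − U₀ᵀU₀ + U₀ᵀexp(−2Ht)U₀]⁻¹U₀ᵀexp(−Ht)` satisfies `σ ≥ β`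
for all `t ≥ 0`. -/
theorem stmt_14 {n N : ℕ} (H : Matrix (Fin n) (Fin n) ℝ) (hH : H.IsSymm)
    (U₀ : Matrix (Fin n) (Fin N) ℝ)
    (hneg : (-(U₀ᵀ * H * U₀)).PosDef)
    (Z : ℝ → Matrix (Fin n) (Fin n) ℝ)
    (hZ : ∀ t : ℝ, Z t = NormedSpace.exp ((-t) • H) * U₀ *
        (1 - U₀ᵀ * U₀ + U₀ᵀ * NormedSpace.exp ((-(2 * t)) • H) * U₀)⁻¹ * U₀ᵀ * NormedSpace.exp ((-t) • H)) :
    ∀ t ≥ (0:ℝ), ∀ σ ∈ spectrum ℝ (Z t), σ ≠ 0 →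
      min 1 (minEig (U₀ᵀ * U₀)) ≤ σ := by
  intro t ht σ hσ hσ0
  have hHherm : H.IsHermitian := by
    rw [Matrix.IsHermitian, Matrix.conjTranspose_eq_transpose_of_trivial]
    exact hH
  set E : Matrix (Fin n) (Fin n) ℝ := exp ((-t) • H) with hE
  set E2 : Matrix (Fin n) (Fin n) ℝ := exp ((-(2 * t)) • H) with hE2
  set G : Matrix (Fin N) (Fin N) ℝ := U₀ᵀ * U₀ with hG
  set K : Matrix (Fin N) (Fin N) ℝ := U₀ᵀ * E2 * U₀ with hK
  set M : Matrix (Fin N) (Fin N) ℝ := 1 - G + K with hM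
  have hEE : E * E = E2 := by
    rw [hE, hE2, ← Matrix.exp_add_of_commute _ _ (Commute.refl _)]
    congr 1
    rw [← add_smul]
    ring_nf
  have hA2herm : ((-(2 * t)) • H).IsHermitian := by
    rw [Matrix.IsHermitian, Matrix.conjTranspose_smul, star_trivial, hHherm.eq]
  -- the key quadratic inequality `xᵀGx ≤ xᵀKx`
  have hquad : ∀ x : Fin N → ℝ, x ⬝ᵥ (G *ᵥ x) ≤ x ⬝ᵥ (K *ᵥ x) := by
    intro x
    set y : Fin n → ℝ := U₀ *ᵥ x with hy
    have hGx : x ⬝ᵥ (G *ᵥ x) = y ⬝ᵥ y := by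
      rw [hG, ← Matrix.mulVec_mulVec, Matrix.dotProduct_mulVec, Matrix.vecMul_transpose]
    have hKx : x ⬝ᵥ (K *ᵥ x) = y ⬝ᵥ (E2 *ᵥ y) := by
      rw [hK, ← Matrix.mulVec_mulVec, ← Matrix.mulVec_mulVec,
        Matrix.dotProduct_mulVec, Matrix.vecMul_transpose]
    have hps := (exp_sub_one_sub_posSemidef hA2herm).dotProduct_mulVec_nonneg y
    rw [star_trivial, Matrix.sub_mulVec, Matrix.sub_mulVec, Matrix.one_mulVec,
      dotProduct_sub, dotProduct_sub] at hps
    have hAy : y ⬝ᵥ (((-(2 * t)) • H) *ᵥ y) = (-(2 * t)) * (y ⬝ᵥ (H *ᵥ y)) := by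
      rw [Matrix.smul_mulVec, dotProduct_smul, smul_eq_mul]
    have hHy : y ⬝ᵥ (H *ᵥ y) = x ⬝ᵥ ((U₀ᵀ * H * U₀) *ᵥ x) := by
      conv_rhs => rw [← Matrix.mulVec_mulVec, ← Matrix.mulVec_mulVec,
        Matrix.dotProduct_mulVec, Matrix.vecMul_transpose]
    have hnegx := hneg.posSemidef.dotProduct_mulVec_nonneg x
    rw [star_trivial, Matrix.neg_mulVec, dotProduct_neg] at hnegx
    have hHle : x ⬝ᵥ ((U₀ᵀ * H * U₀) *ᵥ x) ≤ 0 := by linarith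
    rw [← hE2] at hps
    have : 0 ≤ (-(2 * t)) * (y ⬝ᵥ (H *ᵥ y)) := by
      rw [hHy]
      have h2t : (0:ℝ) ≤ 2 * t := by linarith
      nlinarith
    rw [hGx, hKx]
    rw [hAy] at hps
    linarith
  -- M is positive definite, hence invertible
  have hGherm : G.IsHermitian := by
    rw [Matrix.IsHermitian, Matrix.conjTranspose_eq_transpose_of_trivial, hG,
      Matrix.transpose_mul, Matrix.transpose_transpose]
  have hE2symm : E2ᵀ = E2 := by
    rw [hE2, ← Matrix.exp_transpose, Matrix.transpose_smul, hH.eq]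
  have hKherm : K.IsHermitian := by
    rw [Matrix.IsHermitian, Matrix.conjTranspose_eq_transpose_of_trivial, hK,
      Matrix.transpose_mul, Matrix.transpose_mul, Matrix.transpose_transpose, hE2symm,
      ← Matrix.mul_assoc]
  have hMpd : M.PosDef := by
    refine Matrix.PosDef.of_dotProduct_mulVec_pos ?_ ?_
    · rw [Matrix.IsHermitian, hM, Matrix.conjTranspose_add, Matrix.conjTranspose_sub,
        Matrix.conjTranspose_one, hGherm.eq, hKherm.eq]
    · intro x hx
      rw [star_trivial, hM, Matrix.add_mulVec, Matrix.sub_mulVec, Matrix.one_mulVec,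
        dotProduct_add, dotProduct_sub]
      have hxx : 0 < x ⬝ᵥ x := by
        rcases lt_or_eq_of_le (dot_self_nonneg' x) with h | h
        · exact h
        · exact absurd (dotProduct_self_eq_zero.mp h.symm) hx
      have := hquad x
      linarith
  have hMdet : IsUnit M.det := (Matrix.isUnit_iff_isUnit_det M).mp hMpd.isUnit
  have hMM : M * M⁻¹ = 1 := Matrix.mul_nonsing_inv M hMdet
  -- extract an eigenvector
  have hnu : ¬ IsUnit (σ • (1 : Matrix (Fin n) (Fin n) ℝ) - Z t) := by
    have := spectrum.mem_iff.mp hσ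
    rwa [Algebra.algebraMap_eq_smul_one] at this
  have hdet : (σ • (1 : Matrix (Fin n) (Fin n) ℝ) - Z t).det = 0 := by
    by_contra h
    exact hnu ((Matrix.isUnit_iff_isUnit_det _).mpr (isUnit_iff_ne_zero.mpr h))
  obtain ⟨v, hv0, hv⟩ := (Matrix.exists_mulVec_eq_zero_iff).mpr hdet
  have hZv : (Z t) *ᵥ v = σ • v := by
    rw [Matrix.sub_mulVec, Matrix.smul_mulVec, Matrix.one_mulVec, sub_eq_zero] at hv
    exact hv.symm
  set w : Fin N → ℝ := M⁻¹ *ᵥ (U₀ᵀ *ᵥ (E *ᵥ v)) with hw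
  have hZw : E *ᵥ (U₀ *ᵥ w) = σ • v := by
    rw [← hZv, hZ t, ← hE, ← hE2, ← hK, ← hM, hw]
    simp only [← Matrix.mulVec_mulVec]
  have hwne : w ≠ 0 := by
    intro h
    rw [h, Matrix.mulVec_zero, Matrix.mulVec_zero] at hZw
    exact hv0 ((smul_eq_zero.mp hZw.symm).resolve_left hσ0)
  have hMw : M *ᵥ w = U₀ᵀ *ᵥ (E *ᵥ v) := by
    rw [hw, Matrix.mulVec_mulVec, hMM, Matrix.one_mulVec]
  have hKMw : σ • (M *ᵥ w) = K *ᵥ w := by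
    rw [hMw, ← Matrix.mulVec_smul, ← Matrix.mulVec_smul, ← hZw, hK, ← hEE]
    simp only [← Matrix.mulVec_mulVec]
  -- pass to scalars
  set s : ℝ := w ⬝ᵥ w with hs'
  set g : ℝ := w ⬝ᵥ (G *ᵥ w) with hg'
  set k : ℝ := w ⬝ᵥ (K *ᵥ w) with hk'
  have heq : σ * (s - g + k) = k := by
    have := congrArg (fun z => w ⬝ᵥ z) hKMw
    rw [dotProduct_smul, smul_eq_mul, hM, Matrix.add_mulVec, Matrix.sub_mulVec,
      Matrix.one_mulVec, dotProduct_add, dotProduct_sub] at this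
    simpa only [hs', hg', hk'] using this
  have hs : 0 < s := by
    rcases lt_or_eq_of_le (dot_self_nonneg' w) with h | h
    · exact h
    · exact absurd (dotProduct_self_eq_zero.mp h.symm) hwne
  have hgk : g ≤ k := hquad w
  -- Rayleigh bound : minEig G * s ≤ g
  have hbdd : BddBelow {r : ℝ | ∃ a : Fin N → ℝ, a ⬝ᵥ a = 1 ∧ r = a ⬝ᵥ ((U₀ᵀ * U₀) *ᵥ a)} := by
    refine ⟨0, fun r hr => ?_⟩
    obtain ⟨a, -, rfl⟩ := hr
    rw [← Matrix.mulVec_mulVec, Matrix.dotProduct_mulVec, Matrix.vecMul_transpose]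
    exact dot_self_nonneg' _
  have hray : minEig (U₀ᵀ * U₀) * s ≤ g := by
    set a : Fin N → ℝ := (Real.sqrt s)⁻¹ • w with ha
    have hsq : Real.sqrt s * Real.sqrt s = s := Real.mul_self_sqrt hs.le
    have hsqpos : 0 < Real.sqrt s := Real.sqrt_pos.mpr hs
    have haa : a ⬝ᵥ a = 1 := by
      rw [ha, smul_dotProduct, dotProduct_smul, smul_eq_mul, smul_eq_mul, ← hs']
      field_simp
      rw [Real.sq_sqrt hs.le]
    have haGa : a ⬝ᵥ ((U₀ᵀ * U₀) *ᵥ a) = ((Real.sqrt s)⁻¹ * (Real.sqrt s)⁻¹) * g := by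
      rw [ha, Matrix.mulVec_smul, smul_dotProduct, dotProduct_smul, smul_eq_mul, smul_eq_mul,
        hg', hG]
      ring
    have hmem : a ⬝ᵥ ((U₀ᵀ * U₀) *ᵥ a) ∈
        {r : ℝ | ∃ b : Fin N → ℝ, b ⬝ᵥ b = 1 ∧ r = b ⬝ᵥ ((U₀ᵀ * U₀) *ᵥ b)} :=
      ⟨a, haa, rfl⟩
    have hle : minEig (U₀ᵀ * U₀) ≤ ((Real.sqrt s)⁻¹ * (Real.sqrt s)⁻¹) * g := by
      rw [← haGa]
      exact csInf_le hbdd hmem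
    have hinv : (Real.sqrt s)⁻¹ * (Real.sqrt s)⁻¹ = s⁻¹ := by
      rw [← mul_inv, hsq]
    rw [hinv] at hle
    calc minEig (U₀ᵀ * U₀) * s ≤ (s⁻¹ * g) * s := by
          exact mul_le_mul_of_nonneg_right hle hs.le
      _ = g := by field_simp
  set β : ℝ := min 1 (minEig (U₀ᵀ * U₀)) with hβ
  have hβ1 : β ≤ 1 := min_le_left _ _
  have hβm : β ≤ minEig (U₀ᵀ * U₀) := min_le_right _ _
  have hβs : β * s ≤ g := le_trans (mul_le_mul_of_nonneg_right hβm hs.le) hray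
  have hD : 0 < s - g + k := by linarith
  have hfin : β * (s - g + k) ≤ σ * (s - g + k) := by nlinarith
  exact le_of_mul_le_mul_right hfin hD
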